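/- Let V be a finite-dimensional ℂ-vector space carrying a Q-deformed sl₂-current representation, and suppose v ∈ V satisfies X⁺_t v = 0 and J_t v = u_t·v for all t ∈ ℕ (for some scalars u_t ∈ ℂ), X₀^{−(n)} v ≠ 0, and X₀^{−(n+1)} v = 0, for some n ∈ ℕ. Then for all s, t ∈ ℕ: Σ_{w=0}^{n} C(n,w)·(−Q)^w·J_{t+n·s+w}^⟨1⟩ v = Σ_{k=0}^{n−1} (−1)^{n−k+1}·(Σ_{w=0}^{k} C(k,w)·(−Q)^w·J_{t+k·s+w}^⟨1⟩)·J_s^⟨n−k⟩ v, where J_m^⟨1⟩ := J_m − Q·J_{m+1}. -/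
import Mathlib
set_option maxRecDepth 4000


open Finset
/-- `J_s^⟨p⟩`, defined recursively:
`J_s^⟨0⟩ = 1` and
`J_s^⟨p⟩ = (1/p)·Σ_{z=1}^{p} (−1)^{z−1}·(Σ_{w=0}^{z} C(z,w)·(−Q)^w·J_{z·s+w})·J_s^⟨p−z⟩`. -/
noncomputable def Jbr {A : Type*} [Ring A] [Algebra ℂ A] (Q : ℂ) (J : ℕ → A) (s : ℕ) : ℕ → A
  | 0 => 1
  | p + 1 =>
      ((p : ℂ) + 1)⁻¹ •
        ∑ z ∈ Finset.range (p + 1),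
          ((-1 : ℂ) ^ z) •
            ((∑ w ∈ Finset.range (z + 2),
                (((z + 1).choose w : ℂ) * (-Q) ^ w) • J ((z + 1) * s + w)) *
              Jbr Q J s (p - z))
  termination_by p => p
  decreasing_by omega



section Aux
variable {V : Type*} [AddCommGroup V] [Module ℂ V]

/-- `𝔥^{(z)}_m = Σ_{w≤z} C(z,w)(−Q)^w J_{m+w}` -/
noncomputable def hOp (Q : ℂ) (J : ℕ → Module.End ℂ V) (z m : ℕ) : Module.End ℂ V :=
  ∑ w ∈ range (z+1), ((z.choose w : ℂ) * (-Q)^w) • J (m+w)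

noncomputable def fOp (Q : ℂ) (Xm : ℕ → Module.End ℂ V) (l m : ℕ) : Module.End ℂ V :=
  ∑ w ∈ range (l+1), ((l.choose w : ℂ) * (-Q)^w) • Xm (m+w)

noncomputable def Phi (Q : ℂ) (Xm : ℕ → Module.End ℂ V) (s : ℕ) : ℕ → ℕ → Module.End ℂ V
  | 0, q => if q = 0 then 1 else 0
  | (R+1), q => ((R:ℂ)+1)⁻¹ • ∑ k ∈ range (q+1), fOp Q Xm k (k*s) * Phi Q Xm s R (q-k)

noncomputable def eta (Q : ℂ) (u : ℕ → ℂ) (z m : ℕ) : ℂ :=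
  ∑ w ∈ range (z+1), ((z.choose w : ℂ) * (-Q)^w) • u (m+w)

noncomputable def jc (Q : ℂ) (u : ℕ → ℂ) (s : ℕ) : ℕ → ℂ
  | 0 => 1
  | (p+1) => ((p:ℂ)+1)⁻¹ *
      ∑ z ∈ range (p+1), (-1:ℂ)^z * (eta Q u (z+1) ((z+1)*s) * jc Q u s (p-z))
  termination_by p => p
  decreasing_by omega

/-- generic Pascal splitting -/
lemma pascal_sum {M : Type*} [AddCommGroup M] [Module ℂ M] (Q : ℂ) (g : ℕ → M) (z : ℕ) :
    ∑ w ∈ range (z+2), (((z+1).choose w : ℂ) * (-Q)^w) • g w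
      = ∑ w ∈ range (z+1), ((z.choose w : ℂ) * (-Q)^w) • g w
        + (-Q) • ∑ w ∈ range (z+1), ((z.choose w : ℂ) * (-Q)^w) • g (w+1) := by
  rw [Finset.sum_range_succ' (fun w => (((z+1).choose w : ℂ) * (-Q)^w) • g w) (z+1)]
  have h1 : ∑ w ∈ range (z+1), ((((z+1).choose (w+1) : ℕ) : ℂ) * (-Q)^(w+1)) • g (w+1)
      = ∑ w ∈ range (z+1), ((z.choose w : ℂ) * (-Q)^(w+1)) • g (w+1)
        + ∑ w ∈ range (z+1), ((z.choose (w+1) : ℂ) * (-Q)^(w+1)) • g (w+1) := by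
    rw [← Finset.sum_add_distrib]
    refine Finset.sum_congr rfl fun w _ => ?_
    rw [Nat.choose_succ_succ]
    push_cast
    rw [add_mul, add_smul]
  rw [h1]
  have h2 : ∑ w ∈ range (z+1), ((z.choose (w+1) : ℂ) * (-Q)^(w+1)) • g (w+1)
      = ∑ w ∈ range (z+1), ((z.choose w : ℂ) * (-Q)^w) • g w
        - (((z.choose 0 : ℂ)) * (-Q)^0) • g 0 := by
    have := Finset.sum_range_succ' (fun w => ((z.choose w : ℂ) * (-Q)^w) • g w) (z+1)
    have h3 : ∑ w ∈ range (z+2), ((z.choose w : ℂ) * (-Q)^w) • g w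
        = ∑ w ∈ range (z+1), ((z.choose w : ℂ) * (-Q)^w) • g w := by
      rw [Finset.sum_range_succ]
      simp [Nat.choose_eq_zero_of_lt (Nat.lt_succ_self z)]
    rw [h3] at this
    rw [eq_sub_iff_add_eq, ← this]
  rw [h2]
  have h4 : ∑ w ∈ range (z+1), ((z.choose w : ℂ) * (-Q)^(w+1)) • g (w+1)
      = (-Q) • ∑ w ∈ range (z+1), ((z.choose w : ℂ) * (-Q)^w) • g (w+1) := by
    rw [Finset.smul_sum]
    refine Finset.sum_congr rfl fun w _ => ?_
    rw [smul_smul, pow_succ]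
    ring_nf
  rw [h4]
  simp
  abel


-- triangle helpers
lemma tri {M : Type*} [AddCommMonoid M] (N : ℕ) (f : ℕ → ℕ → M) :
    ∑ q ∈ range N, ∑ k ∈ range (q+1), f k (q-k) = ∑ k ∈ range N, ∑ m ∈ range (N-k), f k m := by
  induction N with
  | zero => simp
  | succ N ih =>
    rw [Finset.sum_range_succ, ih, Finset.sum_range_succ (fun k => ∑ m ∈ range (N+1-k), f k m) N]
    have h1 : ∀ k ∈ range N, ∑ m ∈ range (N+1-k), f k m
        = ∑ m ∈ range (N-k), f k m + f k (N-k) := by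
      intro k hk
      rw [Finset.mem_range] at hk
      have : N + 1 - k = (N - k) + 1 := by omega
      rw [this, Finset.sum_range_succ]
    rw [Finset.sum_congr rfl h1, Finset.sum_add_distrib,
      Finset.sum_range_succ (fun k => f k (N-k)) N]
    simp [add_assoc]

lemma tri_swap {M : Type*} [AddCommMonoid M] (N : ℕ) (g : ℕ → ℕ → M) :
    ∑ k ∈ range N, ∑ j ∈ range (N-k), g k j = ∑ j ∈ range N, ∑ k ∈ range (N-j), g k j := by
  rw [← tri N g, ← tri N (fun j k => g k j)]
  refine Finset.sum_congr rfl fun q hq => ?_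
  rw [← Finset.sum_range_reflect]
  refine Finset.sum_congr rfl fun k hk => ?_
  rw [Finset.mem_range] at hk
  have h1 : q + 1 - 1 - k = q - k := by omega
  have h2 : q - (q - k) = k := by omega
  rw [h1, h2]

lemma tri_count {M : Type*} [AddCommMonoid M] (N : ℕ) (g : ℕ → M) :
    ∑ k ∈ range N, ∑ j ∈ range (N-k), g (k+j) = ∑ u ∈ range N, (u+1) • g u := by
  rw [← tri N (fun k m => g (k+m))]
  refine Finset.sum_congr rfl fun q hq => ?_
  have h1 : ∀ k ∈ range (q+1), g (k + (q-k)) = g q := by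
    intro k hk
    rw [Finset.mem_range] at hk
    congr 1
    omega
  rw [Finset.sum_congr rfl h1, Finset.sum_const, Finset.card_range]

section Main
variable (Q : ℂ) (J Xm Xp : ℕ → Module.End ℂ V) (s : ℕ) (u : ℕ → ℂ)

lemma hOp_zero (m : ℕ) : hOp Q J 0 m = J m := by simp [hOp]
lemma fOp_zero (m : ℕ) : fOp Q Xm 0 m = Xm m := by simp [fOp]

lemma hOp_succ (z m : ℕ) : hOp Q J (z+1) m = hOp Q J z m - Q • hOp Q J z (m+1) := by
  have h := pascal_sum Q (fun w => J (m+w)) z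
  have h3 : ∑ w ∈ range (z+1), (((z.choose w : ℕ):ℂ) * (-Q)^w) • J (m+(w+1))
      = ∑ w ∈ range (z+1), (((z.choose w : ℕ):ℂ) * (-Q)^w) • J ((m+1)+w) :=
    Finset.sum_congr rfl (fun w _ => by rw [show m+(w+1) = (m+1)+w by omega])
  rw [h3] at h
  show hOp Q J (z+1) m = _
  rw [hOp, hOp, hOp]
  rw [h]
  rw [neg_smul, sub_eq_add_neg]

lemma fOp_succ (l m : ℕ) : fOp Q Xm (l+1) m = fOp Q Xm l m - Q • fOp Q Xm l (m+1) := by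
  have h := pascal_sum Q (fun w => Xm (m+w)) l
  have h3 : ∑ w ∈ range (l+1), (((l.choose w : ℕ):ℂ) * (-Q)^w) • Xm (m+(w+1))
      = ∑ w ∈ range (l+1), (((l.choose w : ℕ):ℂ) * (-Q)^w) • Xm ((m+1)+w) :=
    Finset.sum_congr rfl (fun w _ => by rw [show m+(w+1) = (m+1)+w by omega])
  rw [h3] at h
  rw [fOp, fOp, fOp, h, neg_smul, sub_eq_add_neg]

lemma eta_succ (z m : ℕ) : eta Q u (z+1) m = eta Q u z m - Q • eta Q u z (m+1) := by
  have h := pascal_sum Q (fun w => u (m+w)) z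
  have h3 : ∑ w ∈ range (z+1), (((z.choose w : ℕ):ℂ) * (-Q)^w) • u (m+(w+1))
      = ∑ w ∈ range (z+1), (((z.choose w : ℕ):ℂ) * (-Q)^w) • u ((m+1)+w) :=
    Finset.sum_congr rfl (fun w _ => by rw [show m+(w+1) = (m+1)+w by omega])
  rw [h3] at h
  rw [eta, eta, eta, h, neg_smul, sub_eq_add_neg]


lemma comm_ff (h4 : ∀ a b, Xm b * Xm a = Xm a * Xm b) (a b c d : ℕ) :
    fOp Q Xm a b * fOp Q Xm c d = fOp Q Xm c d * fOp Q Xm a b := by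
  simp only [fOp, Finset.sum_mul, Finset.mul_sum, smul_mul_assoc, mul_smul_comm,
    Finset.smul_sum]
  rw [Finset.sum_comm]
  refine Finset.sum_congr rfl fun w _ => Finset.sum_congr rfl fun w' _ => ?_
  rw [h4, smul_comm]

lemma comm_h_f (h2m : ∀ a b, J a * Xm b - Xm b * J a = -((2:ℂ) • Xm (a+b))) (z l m r : ℕ) :
    hOp Q J z m * fOp Q Xm l r
      = fOp Q Xm l r * hOp Q J z m - (2:ℂ) • fOp Q Xm (z+l) (m+r) := by
  induction z generalizing m with
  | zero =>
    rw [hOp_zero, zero_add]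
    simp only [fOp, Finset.mul_sum, Finset.sum_mul, mul_smul_comm, smul_mul_assoc,
      Finset.smul_sum, ← Finset.sum_sub_distrib]
    refine Finset.sum_congr rfl fun w _ => ?_
    have h := h2m m (r+w)
    have h2 : J m * Xm (r+w) = Xm (r+w) * J m - (2:ℂ) • Xm (m+r+w) := by
      have h3 : m + (r+w) = m+r+w := by omega
      rw [h3] at h
      rw [sub_eq_iff_eq_add] at h
      rw [h]
      module
    rw [h2, smul_sub, smul_comm ((l.choose w : ℂ) * (-Q)^w) (2:ℂ)]
  | succ z ih =>
    rw [hOp_succ Q J z m, sub_mul, smul_mul_assoc, ih m, ih (m+1),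
      show z+1+l = z+l+1 from by omega, fOp_succ Q Xm (z+l) (m+r),
      show m+1+r = m+r+1 from by omega, mul_sub, mul_smul_comm]
    module

lemma comm_E_f (h3 : ∀ a b, Xp b * Xm a - Xm a * Xp b = J (a+b) - Q • J (a+b+1))
    (r l m : ℕ) :
    Xp r * fOp Q Xm l m = fOp Q Xm l m * Xp r + hOp Q J (l+1) (r+m) := by
  induction l generalizing m with
  | zero =>
    rw [fOp_zero, show (0+1 : ℕ) = 1 from rfl]
    have h1 : hOp Q J 1 (r+m) = J (r+m) - Q • J (r+m+1) := by
      rw [show (1:ℕ) = 0+1 from rfl, hOp_succ, hOp_zero, hOp_zero]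
    rw [h1, show r + m = m + r from Nat.add_comm r m]
    exact sub_eq_iff_eq_add'.mp (h3 m r)
  | succ l ih =>
    rw [fOp_succ, mul_sub, mul_smul_comm, ih m, ih (m+1),
      show r+(m+1) = (r+m)+1 from by omega, hOp_succ Q J (l+1) (r+m), sub_mul,
      smul_mul_assoc]
    module

lemma hOp_apply (v : V) (hJv : ∀ a, J a v = u a • v) (z m : ℕ) :
    (hOp Q J z m) v = eta Q u z m • v := by
  simp only [hOp, eta, LinearMap.sum_apply, LinearMap.smul_apply, hJv, smul_smul,
    smul_eq_mul, Finset.sum_smul]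


lemma Phi_zero_eq (q : ℕ) : Phi Q Xm s 0 q = if q = 0 then 1 else 0 := rfl

lemma Phi_succ_def (R q : ℕ) : Phi Q Xm s (R+1) q
    = ((R:ℂ)+1)⁻¹ • ∑ k ∈ range (q+1), fOp Q Xm k (k*s) * Phi Q Xm s R (q-k) := rfl

lemma Phi_rec (R q : ℕ) : ((R:ℂ)+1) • Phi Q Xm s (R+1) q
    = ∑ k ∈ range (q+1), fOp Q Xm k (k*s) * Phi Q Xm s R (q-k) := by
  rw [Phi_succ_def, smul_smul, mul_inv_cancel₀ (Nat.cast_add_one_ne_zero R), one_smul]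

lemma Phi_one (q : ℕ) : Phi Q Xm s 1 q = fOp Q Xm q (q*s) := by
  have h := Phi_rec Q Xm s 0 q
  rw [Nat.cast_zero, zero_add, one_smul] at h
  rw [show (1:ℕ) = 0+1 from rfl, h,
    Finset.sum_eq_single_of_mem q (self_mem_range_succ q)]
  · rw [Nat.sub_self, Phi_zero_eq, if_pos rfl, mul_one]
  · intro k hk hne
    rw [Phi_zero_eq, if_neg, mul_zero]
    rw [Finset.mem_range] at hk
    omega

lemma Phi_factorial (R : ℕ) : Phi Q Xm s R 0 = ((R.factorial : ℂ))⁻¹ • (Xm 0)^R := by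
  induction R with
  | zero => simp [Phi_zero_eq, Nat.factorial]
  | succ R ih =>
    rw [Phi_succ_def, Finset.sum_range_one, Nat.zero_mul, Nat.sub_zero, fOp_zero, ih,
      mul_smul_comm, smul_smul, ← pow_succ' (Xm 0) R]
    congr 1
    rw [Nat.factorial_succ]
    push_cast
    rw [mul_inv]

lemma comm_f_Phi (h4 : ∀ a b, Xm b * Xm a = Xm a * Xm b) (a b : ℕ) :
    ∀ R q, fOp Q Xm a b * Phi Q Xm s R q = Phi Q Xm s R q * fOp Q Xm a b := by
  intro R
  induction R with
  | zero =>
    intro q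
    rw [Phi_zero_eq]
    by_cases h : q = 0 <;> simp [h]
  | succ R ih =>
    intro q
    rw [Phi_succ_def, mul_smul_comm, smul_mul_assoc, Finset.mul_sum, Finset.sum_mul]
    congr 1
    refine Finset.sum_congr rfl fun k _ => ?_
    rw [← mul_assoc, comm_ff Q Xm h4, mul_assoc, ih, ← mul_assoc]


lemma comm_h_Phi (h2m : ∀ a b, J a * Xm b - Xm b * J a = -((2:ℂ) • Xm (a+b)))
    (h4 : ∀ a b, Xm b * Xm a = Xm a * Xm b) (z m : ℕ) :
    ∀ R q, hOp Q J z m * Phi Q Xm s (R+1) q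
      = Phi Q Xm s (R+1) q * hOp Q J z m
        - (2:ℂ) • ∑ k ∈ range (q+1), fOp Q Xm (z+k) (m+k*s) * Phi Q Xm s R (q-k) := by
  intro R
  induction R with
  | zero =>
    intro q
    have hsum : ∑ k ∈ range (q+1), fOp Q Xm (z+k) (m+k*s) * Phi Q Xm s 0 (q-k)
        = fOp Q Xm (z+q) (m+q*s) := by
      rw [Finset.sum_eq_single_of_mem q (self_mem_range_succ q)]
      · rw [Nat.sub_self, Phi_zero_eq, if_pos rfl, mul_one]
      · intro k hk hne
        rw [Phi_zero_eq, if_neg, mul_zero]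
        rw [Finset.mem_range] at hk
        omega
    rw [Phi_one, hsum]
    exact comm_h_f Q J Xm h2m z q m (q*s)
  | succ R ih =>
    intro q
    have hne : (((R+1:ℕ)):ℂ) + 1 ≠ 0 := Nat.cast_add_one_ne_zero (R+1)
    apply smul_right_injective (Module.End ℂ V) hne
    show ((((R+1:ℕ)):ℂ) + 1) • _ = ((((R+1:ℕ)):ℂ) + 1) • _
    have hrec := Phi_rec Q Xm s (R+1) q
    have step1 : ((((R+1:ℕ)):ℂ) + 1) • (hOp Q J z m * Phi Q Xm s (R+1+1) q)
        = ∑ k ∈ range (q+1), (fOp Q Xm k (k*s) * (Phi Q Xm s (R+1) (q-k) * hOp Q J z m)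
            - (2:ℂ) • (fOp Q Xm k (k*s) * ∑ j ∈ range ((q-k)+1),
                fOp Q Xm (z+j) (m+j*s) * Phi Q Xm s R (q-k-j))
            - (2:ℂ) • (fOp Q Xm (z+k) (m+k*s) * Phi Q Xm s (R+1) (q-k))) := by
      rw [← mul_smul_comm, hrec, Finset.mul_sum]
      refine Finset.sum_congr rfl fun k _ => ?_
      rw [← mul_assoc, comm_h_f Q J Xm h2m z k m (k*s), sub_mul, smul_mul_assoc, mul_assoc,
        ih (q-k), mul_sub, mul_smul_comm]
    rw [step1, Finset.sum_sub_distrib, Finset.sum_sub_distrib]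
    -- piece 1
    have p1 : ∑ k ∈ range (q+1), fOp Q Xm k (k*s) * (Phi Q Xm s (R+1) (q-k) * hOp Q J z m)
        = ((((R+1:ℕ)):ℂ) + 1) • (Phi Q Xm s (R+1+1) q * hOp Q J z m) := by
      rw [← smul_mul_assoc, hrec, Finset.sum_mul]
      exact Finset.sum_congr rfl fun k _ => (mul_assoc _ _ _).symm
    -- piece 2 : double sum
    have p2 : ∑ k ∈ range (q+1), (2:ℂ) • (fOp Q Xm k (k*s) * ∑ j ∈ range ((q-k)+1),
          fOp Q Xm (z+j) (m+j*s) * Phi Q Xm s R (q-k-j))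
        = (2:ℂ) • (((R:ℂ)+1) • ∑ j ∈ range (q+1),
            fOp Q Xm (z+j) (m+j*s) * Phi Q Xm s (R+1) (q-j)) := by
      rw [← Finset.smul_sum]
      congr 1
      have e1 : ∀ k ∈ range (q+1), fOp Q Xm k (k*s) * ∑ j ∈ range ((q-k)+1),
            fOp Q Xm (z+j) (m+j*s) * Phi Q Xm s R (q-k-j)
          = ∑ j ∈ range ((q+1)-k), fOp Q Xm (z+j) (m+j*s) *
              (fOp Q Xm k (k*s) * Phi Q Xm s R ((q-j)-k)) := by
        intro k hk
        rw [Finset.mem_range] at hk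
        rw [show (q-k)+1 = (q+1)-k from by omega, Finset.mul_sum]
        refine Finset.sum_congr rfl fun j hj => ?_
        rw [Finset.mem_range] at hj
        rw [show q-k-j = (q-j)-k from by omega, ← mul_assoc,
          comm_ff Q Xm h4, mul_assoc]
      rw [Finset.sum_congr rfl e1, tri_swap (q+1)]
      rw [Finset.smul_sum]
      refine Finset.sum_congr rfl fun j hj => ?_
      rw [Finset.mem_range] at hj
      rw [show (q+1)-j = (q-j)+1 from by omega, ← Finset.mul_sum, ← Phi_rec,
        mul_smul_comm]
    rw [p1, p2, ← Finset.smul_sum]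
    push_cast
    module



lemma Phi_weighted (h4 : ∀ a b, Xm b * Xm a = Xm a * Xm b) :
    ∀ (R q : ℕ), (q:ℂ) • Phi Q Xm s (R+1) q
      = ∑ k ∈ range (q+1), (k:ℂ) • (fOp Q Xm k (k*s) * Phi Q Xm s R (q-k)) := by
  intro R
  induction R with
  | zero =>
    intro q
    rw [Phi_one, Finset.sum_eq_single_of_mem q (self_mem_range_succ q)]
    · rw [Nat.sub_self, Phi_zero_eq, if_pos rfl, mul_one]
    · intro k hk hne
      rw [Phi_zero_eq, if_neg, mul_zero, smul_zero]
      rw [Finset.mem_range] at hk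
      omega
  | succ R ih =>
    intro q
    have hne : (((R+1:ℕ)):ℂ) + 1 ≠ 0 := Nat.cast_add_one_ne_zero (R+1)
    apply smul_right_injective (Module.End ℂ V) hne
    show ((((R+1:ℕ)):ℂ) + 1) • _ = ((((R+1:ℕ)):ℂ) + 1) • _
    have hrec := Phi_rec Q Xm s (R+1) q
    have l1 : ((((R+1:ℕ)):ℂ)+1) • ((q:ℂ) • Phi Q Xm s (R+1+1) q)
        = ∑ k ∈ range (q+1), ((k:ℂ) • (fOp Q Xm k (k*s) * Phi Q Xm s (R+1) (q-k))
            + fOp Q Xm k (k*s) * (((q-k:ℕ):ℂ) • Phi Q Xm s (R+1) (q-k))) := by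
      rw [smul_comm, hrec, Finset.smul_sum]
      refine Finset.sum_congr rfl fun k hk => ?_
      rw [Finset.mem_range] at hk
      rw [show (q:ℂ) = (k:ℂ) + ((q-k:ℕ):ℂ) by
          rw [← Nat.cast_add]; exact Nat.cast_inj.mpr (by omega),
        add_smul, mul_smul_comm]
    have l2 : ∑ k ∈ range (q+1), fOp Q Xm k (k*s) * (((q-k:ℕ):ℂ) • Phi Q Xm s (R+1) (q-k))
        = ((R:ℂ)+1) • ∑ j ∈ range (q+1), (j:ℂ) •
            (fOp Q Xm j (j*s) * Phi Q Xm s (R+1) (q-j)) := by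
      have e1 : ∀ k ∈ range (q+1), fOp Q Xm k (k*s) * (((q-k:ℕ):ℂ) • Phi Q Xm s (R+1) (q-k))
          = ∑ j ∈ range ((q+1)-k), (j:ℂ) •
              (fOp Q Xm j (j*s) * (fOp Q Xm k (k*s) * Phi Q Xm s R ((q-j)-k))) := by
        intro k hk
        rw [Finset.mem_range] at hk
        rw [ih (q-k), Finset.mul_sum, show (q-k)+1 = (q+1)-k from by omega]
        refine Finset.sum_congr rfl fun j hj => ?_
        rw [Finset.mem_range] at hj
        rw [mul_smul_comm, show q-k-j = (q-j)-k from by omega, ← mul_assoc,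
          comm_ff Q Xm h4, mul_assoc]
      rw [Finset.sum_congr rfl e1, tri_swap (q+1), Finset.smul_sum]
      refine Finset.sum_congr rfl fun j hj => ?_
      rw [Finset.mem_range] at hj
      rw [show (q+1)-j = (q-j)+1 from by omega, ← Finset.smul_sum, ← Finset.mul_sum,
        ← Phi_rec, mul_smul_comm, smul_comm]
    rw [l1, Finset.sum_add_distrib, l2]
    push_cast
    module


lemma jc_newton (r : ℕ) : ((r:ℂ)+1) * jc Q u s (r+1)
    = ∑ z ∈ range (r+1), (-1:ℂ)^z * (eta Q u (z+1) ((z+1)*s) * jc Q u s (r-z)) := by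
  rw [jc, ← mul_assoc, mul_inv_cancel₀ (Nat.cast_add_one_ne_zero r), one_mul]

lemma star (h2m : ∀ a b, J a * Xm b - Xm b * J a = -((2:ℂ) • Xm (a+b)))
    (h3 : ∀ a b, Xp b * Xm a - Xm a * Xp b = J (a+b) - Q • J (a+b+1))
    (h4 : ∀ a b, Xm b * Xm a = Xm a * Xm b)
    (v : V) (hXv : ∀ a, Xp a v = 0) (hJv : ∀ a, J a v = u a • v) :
    ∀ R p, Xp s (∑ q ∈ range (p+1), ((-1:ℂ)^q * jc Q u s (p-q)) • (Phi Q Xm s (R+1) q v))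
      = ((p:ℂ)+1) • ∑ q ∈ range (p+2),
          ((-1:ℂ)^q * jc Q u s (p+1-q)) • (Phi Q Xm s R q v) := by
  have hEf : ∀ (k:ℕ) (w:V), Xp s (fOp Q Xm k (k*s) w)
      = fOp Q Xm k (k*s) (Xp s w) + hOp Q J (k+1) ((k+1)*s) w := by
    intro k w
    have hc := comm_E_f Q J Xm Xp h3 s k (k*s)
    rw [show s + k*s = (k+1)*s by ring] at hc
    calc Xp s (fOp Q Xm k (k*s) w) = (Xp s * fOp Q Xm k (k*s)) w := rfl
      _ = (fOp Q Xm k (k*s) * Xp s + hOp Q J (k+1) ((k+1)*s)) w := by rw [hc]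
      _ = _ := rfl
  intro R
  induction R with
  | zero =>
    intro p
    rw [map_sum]
    have e1 : ∀ q ∈ range (p+1), Xp s (((-1:ℂ)^q * jc Q u s (p-q)) • (Phi Q Xm s 1 q v))
        = ((-1:ℂ)^q * jc Q u s (p-q) * eta Q u (q+1) ((q+1)*s)) • v := by
      intro q hq
      rw [map_smul, Phi_one, hEf q v, hXv s, map_zero, zero_add,
        hOp_apply Q J u v hJv, smul_smul]
    rw [Finset.sum_congr rfl e1, ← Finset.sum_smul]
    have e2 : ∑ q ∈ range (p+2), ((-1:ℂ)^q * jc Q u s (p+1-q)) • (Phi Q Xm s 0 q v)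
        = jc Q u s (p+1) • v := by
      rw [Finset.sum_eq_single_of_mem 0 (Finset.mem_range.mpr (by omega))]
      · rw [Phi_zero_eq, if_pos rfl]
        simp
      · intro q hq hne
        rw [Phi_zero_eq, if_neg hne]
        simp
    rw [e2, smul_smul]
    congr 1
    rw [jc_newton]
    exact Finset.sum_congr rfl fun q _ => by ring
  | succ R ih =>
    intro p
    have hcR : (((R+1:ℕ)):ℂ) + 1 ≠ 0 := Nat.cast_add_one_ne_zero (R+1)
    apply smul_right_injective V hcR
    show ((((R+1:ℕ)):ℂ) + 1) • _ = ((((R+1:ℕ)):ℂ) + 1) • _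
    -- expand lemma : cR • Phi(R+2) q v = Σ_k f k (Phi(R+1)(q−k) v)
    have expand : ∀ q : ℕ, ((((R+1:ℕ)):ℂ)+1) • (Phi Q Xm s (R+1+1) q v)
        = ∑ k ∈ range (q+1), fOp Q Xm k (k*s) (Phi Q Xm s (R+1) (q-k) v) := by
      intro q
      have h := Phi_rec Q Xm s (R+1) q
      calc ((((R+1:ℕ)):ℂ)+1) • (Phi Q Xm s (R+1+1) q v)
          = (((((R+1:ℕ)):ℂ)+1) • Phi Q Xm s (R+1+1) q) v := rfl
        _ = (∑ k ∈ range (q+1), fOp Q Xm k (k*s) * Phi Q Xm s (R+1) (q-k)) v := by rw [h]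
        _ = _ := by simp [LinearMap.sum_apply, Module.End.mul_apply]
    -- expand lemma for target side as well (with R)
    have expand2 : ∀ q : ℕ, (((R:ℕ):ℂ)+1) • (Phi Q Xm s (R+1) q v)
        = ∑ k ∈ range (q+1), fOp Q Xm k (k*s) (Phi Q Xm s R (q-k) v) := by
      intro q
      have h := Phi_rec Q Xm s R q
      calc (((R:ℕ):ℂ)+1) • (Phi Q Xm s (R+1) q v)
          = ((((R:ℕ):ℂ)+1) • Phi Q Xm s (R+1) q) v := rfl
        _ = (∑ k ∈ range (q+1), fOp Q Xm k (k*s) * Phi Q Xm s R (q-k)) v := by rw [h]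
        _ = _ := by simp [LinearMap.sum_apply, Module.End.mul_apply]
    have weighted : ∀ q : ℕ, ((q:ℕ):ℂ) • (Phi Q Xm s (R+1) q v)
        = ∑ k ∈ range (q+1), ((k:ℕ):ℂ) • fOp Q Xm k (k*s) (Phi Q Xm s R (q-k) v) := by
      intro q
      have h := Phi_weighted Q Xm s h4 R q
      calc ((q:ℕ):ℂ) • (Phi Q Xm s (R+1) q v) = (((q:ℕ):ℂ) • Phi Q Xm s (R+1) q) v := rfl
        _ = (∑ k ∈ range (q+1), ((k:ℕ):ℂ) • (fOp Q Xm k (k*s) * Phi Q Xm s R (q-k))) v := by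
            rw [h]
        _ = _ := by simp [LinearMap.sum_apply, LinearMap.smul_apply, Module.End.mul_apply]
    have hHP : ∀ (k q' : ℕ), hOp Q J (k+1) ((k+1)*s) (Phi Q Xm s (R+1) q' v)
        = eta Q u (k+1) ((k+1)*s) • Phi Q Xm s (R+1) q' v
          - (2:ℂ) • ∑ j ∈ range (q'+1),
              fOp Q Xm (k+1+j) ((k+1+j)*s) (Phi Q Xm s R (q'-j) v) := by
      intro k q'
      have h := comm_h_Phi Q J Xm s h2m h4 (k+1) ((k+1)*s) R q'
      have h2 := congrArg (fun (T : Module.End ℂ V) => T v) h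
      simp only [LinearMap.sub_apply, LinearMap.smul_apply, Module.End.mul_apply,
        LinearMap.sum_apply] at h2
      rw [h2, hOp_apply Q J u v hJv, map_smul]
      congr 2
      refine Finset.sum_congr rfl fun j hj => ?_
      rw [show (k+1)*s + j*s = (k+1+j)*s by ring, show k+1+j = k+1+j from rfl]
    -- step 1 : full expansion of LHS
    have s1 : ((((R+1:ℕ)):ℂ)+1) • Xp s (∑ q ∈ range (p+1),
          ((-1:ℂ)^q * jc Q u s (p-q)) • (Phi Q Xm s (R+1+1) q v))
        = ∑ q ∈ range (p+1), ∑ k ∈ range (q+1), (((-1:ℂ)^q * jc Q u s (p-q)) •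
              fOp Q Xm k (k*s) (Xp s (Phi Q Xm s (R+1) (q-k) v))
            + ((-1:ℂ)^q * jc Q u s (p-q)) •
              (eta Q u (k+1) ((k+1)*s) • Phi Q Xm s (R+1) (q-k) v)
            - ((-1:ℂ)^q * jc Q u s (p-q)) • ((2:ℂ) • ∑ j ∈ range ((q-k)+1),
                fOp Q Xm (k+1+j) ((k+1+j)*s) (Phi Q Xm s R (q-k-j) v))) := by
      rw [← map_smul, Finset.smul_sum]
      have e0 : ∀ q ∈ range (p+1),
          ((((R+1:ℕ)):ℂ)+1) • (((-1:ℂ)^q * jc Q u s (p-q)) • (Phi Q Xm s (R+1+1) q v))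
          = ((-1:ℂ)^q * jc Q u s (p-q)) •
              ∑ k ∈ range (q+1), fOp Q Xm k (k*s) (Phi Q Xm s (R+1) (q-k) v) := by
        intro q hq
        rw [smul_comm, expand q]
      rw [Finset.sum_congr rfl e0, map_sum]
      refine Finset.sum_congr rfl fun q hq => ?_
      rw [map_smul, map_sum, Finset.smul_sum]
      refine Finset.sum_congr rfl fun k hk => ?_
      rw [hEf k, hHP k (q-k), smul_add, smul_sub]
      abel
    rw [s1]
    simp only [Finset.sum_add_distrib, Finset.sum_sub_distrib]
    -- P2 piece
    have hP2 : ∑ q ∈ range (p+1), ∑ k ∈ range (q+1), ((-1:ℂ)^q * jc Q u s (p-q)) •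
          fOp Q Xm k (k*s) (Xp s (Phi Q Xm s (R+1) (q-k) v))
        = ∑ k ∈ range (p+1), ∑ m ∈ range (p+2-k),
            ((-1:ℂ)^k * ((((p-k:ℕ)):ℂ)+1) * ((-1:ℂ)^m * jc Q u s (p-k+1-m))) •
              fOp Q Xm k (k*s) (Phi Q Xm s R m v) := by
      have e : ∑ q ∈ range (p+1), ∑ k ∈ range (q+1), ((-1:ℂ)^q * jc Q u s (p-q)) •
            fOp Q Xm k (k*s) (Xp s (Phi Q Xm s (R+1) (q-k) v))
          = ∑ q ∈ range (p+1), ∑ k ∈ range (q+1),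
              (fun a m => ((-1:ℂ)^a * ((-1:ℂ)^m * jc Q u s (p-a-m))) •
                fOp Q Xm a (a*s) (Xp s (Phi Q Xm s (R+1) m v))) k (q-k) := by
        refine Finset.sum_congr rfl fun q hq => Finset.sum_congr rfl fun k hk => ?_
        rw [Finset.mem_range] at hq hk
        simp only []
        congr 1
        rw [← mul_assoc, ← pow_add, show k + (q-k) = q from by omega,
          show p-k-(q-k) = p-q from by omega]
      rw [e, tri (p+1) (fun a m => ((-1:ℂ)^a * ((-1:ℂ)^m * jc Q u s (p-a-m))) •
                fOp Q Xm a (a*s) (Xp s (Phi Q Xm s (R+1) m v)))]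
      refine Finset.sum_congr rfl fun k hk => ?_
      rw [Finset.mem_range] at hk
      have inner : ∀ m ∈ range (p+1-k), ((-1:ℂ)^k * ((-1:ℂ)^m * jc Q u s (p-k-m))) •
            fOp Q Xm k (k*s) (Xp s (Phi Q Xm s (R+1) m v))
          = (-1:ℂ)^k • fOp Q Xm k (k*s) (Xp s ((((-1:ℂ)^m * jc Q u s ((p-k)-m))) •
              Phi Q Xm s (R+1) m v)) := by
        intro m hm
        rw [map_smul, map_smul, smul_smul]
      rw [Finset.sum_congr rfl inner, ← Finset.smul_sum, ← map_sum, ← map_sum,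
        show p+1-k = (p-k)+1 from by omega, ih (p-k), map_smul, map_sum]
      simp only [map_smul]
      rw [Finset.smul_sum, Finset.smul_sum, show (p-k)+2 = p+2-k from by omega]
      refine Finset.sum_congr rfl fun m hm => ?_
      rw [smul_smul, smul_smul, ← mul_assoc]
    -- P1a piece
    have hP1a : ∑ q ∈ range (p+1), ∑ k ∈ range (q+1), ((-1:ℂ)^q * jc Q u s (p-q)) •
          (eta Q u (k+1) ((k+1)*s) • Phi Q Xm s (R+1) (q-k) v)
        = ∑ m ∈ range (p+1), ((-1:ℂ)^m * ((((p-m:ℕ)):ℂ)+1) * jc Q u s (p-m+1)) •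
            Phi Q Xm s (R+1) m v := by
      have e : ∑ q ∈ range (p+1), ∑ k ∈ range (q+1), ((-1:ℂ)^q * jc Q u s (p-q)) •
            (eta Q u (k+1) ((k+1)*s) • Phi Q Xm s (R+1) (q-k) v)
          = ∑ q ∈ range (p+1), ∑ k ∈ range (q+1),
              (fun a m => (((-1:ℂ)^m * ((-1:ℂ)^a * (eta Q u (a+1) ((a+1)*s) *
                  jc Q u s ((p-m)-a)))) • Phi Q Xm s (R+1) m v)) k (q-k) := by
        refine Finset.sum_congr rfl fun q hq => Finset.sum_congr rfl fun k hk => ?_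
        rw [Finset.mem_range] at hq hk
        simp only []
        rw [smul_smul]
        congr 1
        rw [show (p-(q-k))-k = p-q from by omega, show ((-1:ℂ)^q) = (-1:ℂ)^((q-k)+k) from by
          rw [show (q-k)+k = q from by omega], pow_add]
        ring
      rw [e, tri (p+1) (fun a m => (((-1:ℂ)^m * ((-1:ℂ)^a * (eta Q u (a+1) ((a+1)*s) *
                  jc Q u s ((p-m)-a)))) • Phi Q Xm s (R+1) m v)),
        tri_swap (p+1)]
      refine Finset.sum_congr rfl fun m hm => ?_
      rw [Finset.mem_range] at hm
      rw [show p+1-m = (p-m)+1 from by omega, ← Finset.sum_smul]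
      have e2 : ∑ k ∈ range ((p-m)+1),
            (-1:ℂ)^m * ((-1:ℂ)^k * (eta Q u (k+1) ((k+1)*s) * jc Q u s ((p-m)-k)))
          = (-1:ℂ)^m * ((((p-m:ℕ)):ℂ)+1) * jc Q u s (p-m+1) := by
        rw [← Finset.mul_sum, ← jc_newton Q s u (p-m), ← mul_assoc]
      rw [e2]
    -- P1b piece
    have hP1b : ∑ q ∈ range (p+1), ∑ k ∈ range (q+1), ((-1:ℂ)^q * jc Q u s (p-q)) •
          ((2:ℂ) • ∑ j ∈ range ((q-k)+1),
            fOp Q Xm (k+1+j) ((k+1+j)*s) (Phi Q Xm s R (q-k-j) v))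
        = ∑ w ∈ range (p+1), ∑ m ∈ range (p+1-w),
            ((-1:ℂ)^w * ((-1:ℂ)^m * jc Q u s (p-w-m)) * (2*(((w+1:ℕ)):ℂ))) •
              fOp Q Xm (w+1) ((w+1)*s) (Phi Q Xm s R m v) := by
      have inner : ∀ q ∈ range (p+1),
          ∑ k ∈ range (q+1), ((-1:ℂ)^q * jc Q u s (p-q)) •
            ((2:ℂ) • ∑ j ∈ range ((q-k)+1),
              fOp Q Xm (k+1+j) ((k+1+j)*s) (Phi Q Xm s R (q-k-j) v))
          = ∑ w ∈ range (q+1), ((-1:ℂ)^q * jc Q u s (p-q) * (2*(((w+1:ℕ)):ℂ))) •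
              fOp Q Xm (w+1) ((w+1)*s) (Phi Q Xm s R (q-w) v) := by
        intro q hq
        have c1 : ∀ k ∈ range (q+1), ((-1:ℂ)^q * jc Q u s (p-q)) •
              ((2:ℂ) • ∑ j ∈ range ((q-k)+1),
                fOp Q Xm (k+1+j) ((k+1+j)*s) (Phi Q Xm s R (q-k-j) v))
            = ((-1:ℂ)^q * jc Q u s (p-q) * 2) •
              ∑ j ∈ range ((q+1)-k), (fun w => fOp Q Xm (w+1) ((w+1)*s)
                (Phi Q Xm s R (q-w) v)) (k+j) := by
          intro k hk
          rw [Finset.mem_range] at hk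
          rw [smul_smul, show (q-k)+1 = (q+1)-k from by omega]
          congr 1
          refine Finset.sum_congr rfl fun j hj => ?_
          rw [Finset.mem_range] at hj
          simp only []
          rw [show k+1+j = (k+j)+1 from by omega, show q-k-j = q-(k+j) from by omega]
        rw [Finset.sum_congr rfl c1, ← Finset.smul_sum,
          tri_count (q+1) (fun w => fOp Q Xm (w+1) ((w+1)*s) (Phi Q Xm s R (q-w) v)),
          Finset.smul_sum]
        refine Finset.sum_congr rfl fun w hw => ?_
        rw [← Nat.cast_smul_eq_nsmul ℂ (w+1), smul_smul, mul_assoc]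
      rw [Finset.sum_congr rfl inner]
      have e : ∑ q ∈ range (p+1), ∑ w ∈ range (q+1),
            ((-1:ℂ)^q * jc Q u s (p-q) * (2*(((w+1:ℕ)):ℂ))) •
              fOp Q Xm (w+1) ((w+1)*s) (Phi Q Xm s R (q-w) v)
          = ∑ q ∈ range (p+1), ∑ w ∈ range (q+1),
              (fun a m => ((-1:ℂ)^a * ((-1:ℂ)^m * jc Q u s (p-a-m)) * (2*(((a+1:ℕ)):ℂ))) •
                fOp Q Xm (a+1) ((a+1)*s) (Phi Q Xm s R m v)) w (q-w) := by
        refine Finset.sum_congr rfl fun q hq => Finset.sum_congr rfl fun w hw => ?_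
        rw [Finset.mem_range] at hq hw
        simp only []
        congr 1
        rw [show ((-1:ℂ)^q) = (-1:ℂ)^(w+(q-w)) from by
            rw [show w+(q-w) = q from by omega], pow_add,
          show p-w-(q-w) = p-q from by omega]
        ring
      rw [e, tri (p+1) (fun a m => ((-1:ℂ)^a * ((-1:ℂ)^m * jc Q u s (p-a-m)) *
          (2*(((a+1:ℕ)):ℂ))) • fOp Q Xm (a+1) ((a+1)*s) (Phi Q Xm s R m v))]
    rw [hP2, hP1a, hP1b]
    -- now the RHS
    have hG : ((((R+1:ℕ)):ℂ)+1) • (((p:ℂ)+1) • ∑ q ∈ range (p+2),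
          ((-1:ℂ)^q * jc Q u s (p+1-q)) • (Phi Q Xm s (R+1) q v))
        = ∑ q ∈ range (p+2), (((-1:ℂ)^q * jc Q u s (p+1-q)) * (((p:ℂ)+1) - (q:ℂ))) •
            Phi Q Xm s (R+1) q v
          + ∑ q ∈ range (p+2), ∑ w ∈ range (q+1),
              (((-1:ℂ)^q * jc Q u s (p+1-q)) * (((p:ℂ)+1) + (w:ℂ))) •
                fOp Q Xm w (w*s) (Phi Q Xm s R (q-w) v) := by
      rw [Finset.smul_sum, Finset.smul_sum, ← Finset.sum_add_distrib]
      refine Finset.sum_congr rfl fun q hq => ?_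
      have key : ((((R+1:ℕ)):ℂ)+1) • (((p:ℂ)+1) • (((-1:ℂ)^q * jc Q u s (p+1-q)) •
            Phi Q Xm s (R+1) q v))
          = (((-1:ℂ)^q * jc Q u s (p+1-q)) * (((p:ℂ)+1) - (q:ℂ))) • Phi Q Xm s (R+1) q v
            + ((-1:ℂ)^q * jc Q u s (p+1-q)) •
              ((((p:ℂ)+1) • ((((R:ℕ):ℂ)+1) • (Phi Q Xm s (R+1) q v)))
                + ((q:ℂ) • (Phi Q Xm s (R+1) q v))) := by
        push_cast
        module
      rw [key, expand2 q, weighted q]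
      congr 1
      rw [Finset.smul_sum, ← Finset.sum_add_distrib, Finset.smul_sum]
      refine Finset.sum_congr rfl fun w hw => ?_
      rw [smul_add, smul_smul, smul_smul, ← add_smul, ← mul_add]
    rw [hG]
    have hGtri : ∑ q ∈ range (p+2), ∑ w ∈ range (q+1),
          (((-1:ℂ)^q * jc Q u s (p+1-q)) * (((p:ℂ)+1) + (w:ℂ))) •
            fOp Q Xm w (w*s) (Phi Q Xm s R (q-w) v)
        = ∑ w ∈ range (p+2), ∑ m ∈ range (p+2-w),
            (((-1:ℂ)^w * ((-1:ℂ)^m * jc Q u s (p+1-w-m))) * (((p:ℂ)+1) + (w:ℂ))) •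
              fOp Q Xm w (w*s) (Phi Q Xm s R m v) := by
      have e : ∑ q ∈ range (p+2), ∑ w ∈ range (q+1),
            (((-1:ℂ)^q * jc Q u s (p+1-q)) * (((p:ℂ)+1) + (w:ℂ))) •
              fOp Q Xm w (w*s) (Phi Q Xm s R (q-w) v)
          = ∑ q ∈ range (p+2), ∑ w ∈ range (q+1),
              (fun a m => (((-1:ℂ)^a * ((-1:ℂ)^m * jc Q u s (p+1-a-m))) *
                  (((p:ℂ)+1) + (a:ℂ))) • fOp Q Xm a (a*s) (Phi Q Xm s R m v)) w (q-w) := by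
        refine Finset.sum_congr rfl fun q hq => Finset.sum_congr rfl fun w hw => ?_
        rw [Finset.mem_range] at hq hw
        simp only []
        congr 1
        rw [show ((-1:ℂ)^q) = (-1:ℂ)^(w+(q-w)) from by
            rw [show w+(q-w) = q from by omega], pow_add,
          show p+1-w-(q-w) = p+1-q from by omega]
        ring
      rw [e, tri (p+2) (fun a m => (((-1:ℂ)^a * ((-1:ℂ)^m * jc Q u s (p+1-a-m))) *
          (((p:ℂ)+1) + (a:ℂ))) • fOp Q Xm a (a*s) (Phi Q Xm s R m v))]
    rw [hGtri]
    have hGsplit : ∑ w ∈ range (p+2), ∑ m ∈ range (p+2-w),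
          (((-1:ℂ)^w * ((-1:ℂ)^m * jc Q u s (p+1-w-m))) * (((p:ℂ)+1) + (w:ℂ))) •
            fOp Q Xm w (w*s) (Phi Q Xm s R m v)
        = ∑ w ∈ range (p+2), ∑ m ∈ range (p+2-w),
            (((-1:ℂ)^w * ((-1:ℂ)^m * jc Q u s (p+1-w-m))) * (((p:ℂ)+1) - (w:ℂ))) •
              fOp Q Xm w (w*s) (Phi Q Xm s R m v)
          + ∑ w ∈ range (p+2), ∑ m ∈ range (p+2-w),
              (((-1:ℂ)^w * ((-1:ℂ)^m * jc Q u s (p+1-w-m))) * (2*(w:ℂ))) •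
                fOp Q Xm w (w*s) (Phi Q Xm s R m v) := by
      rw [← Finset.sum_add_distrib]
      refine Finset.sum_congr rfl fun w hw => ?_
      rw [← Finset.sum_add_distrib]
      refine Finset.sum_congr rfl fun m hm => ?_
      rw [← add_smul, ← mul_add]
      congr 2
      ring
    rw [hGsplit]
    have hGa : ∑ w ∈ range (p+2), ∑ m ∈ range (p+2-w),
          (((-1:ℂ)^w * ((-1:ℂ)^m * jc Q u s (p+1-w-m))) * (((p:ℂ)+1) - (w:ℂ))) •
            fOp Q Xm w (w*s) (Phi Q Xm s R m v)
        = ∑ k ∈ range (p+1), ∑ m ∈ range (p+2-k),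
            ((-1:ℂ)^k * ((((p-k:ℕ)):ℂ)+1) * ((-1:ℂ)^m * jc Q u s (p-k+1-m))) •
              fOp Q Xm k (k*s) (Phi Q Xm s R m v) := by
      rw [Finset.sum_range_succ]
      have last : ∑ m ∈ range (p+2-(p+1)),
          (((-1:ℂ)^(p+1) * ((-1:ℂ)^m * jc Q u s (p+1-(p+1)-m))) *
            (((p:ℂ)+1) - (((p+1:ℕ)):ℂ))) •
            fOp Q Xm (p+1) ((p+1)*s) (Phi Q Xm s R m v) = 0 := by
        refine Finset.sum_eq_zero fun m hm => ?_
        have hz : ((p:ℂ)+1) - (((p+1:ℕ)):ℂ) = 0 := by push_cast; ring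
        rw [hz, mul_zero, zero_smul]
      rw [last, add_zero]
      refine Finset.sum_congr rfl fun w hw => Finset.sum_congr rfl fun m hm => ?_
      rw [Finset.mem_range] at hw hm
      congr 1
      have hc : ((((p-w:ℕ)):ℂ)) = (p:ℂ) - (w:ℂ) := by
        rw [Nat.cast_sub (by omega : w ≤ p)]
      rw [show p+1-w-m = p-w+1-m from by omega, hc]
      ring
    have hGb : ∑ w ∈ range (p+2), ∑ m ∈ range (p+2-w),
          (((-1:ℂ)^w * ((-1:ℂ)^m * jc Q u s (p+1-w-m))) * (2*(w:ℂ))) •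
            fOp Q Xm w (w*s) (Phi Q Xm s R m v)
        = - ∑ w ∈ range (p+1), ∑ m ∈ range (p+1-w),
            ((-1:ℂ)^w * ((-1:ℂ)^m * jc Q u s (p-w-m)) * (2*(((w+1:ℕ)):ℂ))) •
              fOp Q Xm (w+1) ((w+1)*s) (Phi Q Xm s R m v) := by
      rw [Finset.sum_range_succ']
      have first : ∑ m ∈ range (p+2-0),
          (((-1:ℂ)^0 * ((-1:ℂ)^m * jc Q u s (p+1-0-m))) * (2*((0:ℕ):ℂ))) •
            fOp Q Xm 0 (0*s) (Phi Q Xm s R m v) = 0 := by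
        refine Finset.sum_eq_zero fun m hm => ?_
        norm_num
      rw [first, add_zero, ← Finset.sum_neg_distrib]
      refine Finset.sum_congr rfl fun w hw => ?_
      rw [Finset.mem_range] at hw
      rw [← Finset.sum_neg_distrib, show p+2-(w+1) = p+1-w from by omega]
      refine Finset.sum_congr rfl fun m hm => ?_
      rw [Finset.mem_range] at hm
      rw [← neg_smul]
      congr 1
      rw [show p+1-(w+1)-m = p-w-m from by omega, pow_succ]
      ring
    have hG1 : ∑ q ∈ range (p+2), (((-1:ℂ)^q * jc Q u s (p+1-q)) * (((p:ℂ)+1) - (q:ℂ))) •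
          Phi Q Xm s (R+1) q v
        = ∑ m ∈ range (p+1), ((-1:ℂ)^m * ((((p-m:ℕ)):ℂ)+1) * jc Q u s (p-m+1)) •
            Phi Q Xm s (R+1) m v := by
      rw [Finset.sum_range_succ]
      have last : (((-1:ℂ)^(p+1) * jc Q u s (p+1-(p+1))) * (((p:ℂ)+1) - (((p+1:ℕ)):ℂ))) •
          Phi Q Xm s (R+1) (p+1) v = 0 := by
        have hz : ((p:ℂ)+1) - (((p+1:ℕ)):ℂ) = 0 := by push_cast; ring
        rw [hz, mul_zero, zero_smul]
      rw [last, add_zero]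
      refine Finset.sum_congr rfl fun m hm => ?_
      rw [Finset.mem_range] at hm
      congr 1
      have hc : ((((p-m:ℕ)):ℂ)) = (p:ℂ) - (m:ℂ) := by
        rw [Nat.cast_sub (by omega : m ≤ p)]
      rw [show p+1-m = p-m+1 from by omega, hc]
      ring
    rw [hGa, hGb, hG1]
    abel

lemma Jbr_apply (v : V) (hJv : ∀ a, J a v = u a • v) :
    ∀ p, (Jbr Q J s p) v = jc Q u s p • v := by
  intro p
  induction p using Nat.strong_induction_on with
  | _ p ihp =>
    match p with
    | 0 =>
      rw [Jbr, jc]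
      simp
    | (p+1) =>
      have e1 : (Jbr Q J s (p+1)) v
          = ((p:ℂ)+1)⁻¹ • ∑ z ∈ range (p+1),
              ((-1:ℂ)^z) • (hOp Q J (z+1) ((z+1)*s) ((Jbr Q J s (p-z)) v)) := by
        rw [Jbr]
        simp only [LinearMap.smul_apply, LinearMap.sum_apply, Module.End.mul_apply]
        refine congrArg _ (Finset.sum_congr rfl fun z hz => ?_)
        rw [hOp, show (z+1)+1 = z+2 from rfl]
        simp [LinearMap.sum_apply, LinearMap.smul_apply]
      rw [e1, jc]
      have e2 : ∀ z ∈ range (p+1),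
          ((-1:ℂ)^z) • (hOp Q J (z+1) ((z+1)*s) ((Jbr Q J s (p-z)) v))
          = ((-1:ℂ)^z * (eta Q u (z+1) ((z+1)*s) * jc Q u s (p-z))) • v := by
        intro z hz
        rw [ihp (p-z) (by omega), map_smul, hOp_apply Q J u v hJv, smul_smul, smul_smul]
        congr 1
        ring
      rw [Finset.sum_congr rfl e2, ← Finset.sum_smul, smul_smul]

lemma hOp_pascal (z a : ℕ) :
    ∑ w ∈ range (z+1), ((z.choose w : ℂ) * (-Q)^w) • (J (a+w) - Q • J (a+w+1))
      = hOp Q J (z+1) a := by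
  rw [hOp_succ]
  simp only [smul_sub, Finset.sum_sub_distrib]
  congr 1
  rw [hOp, Finset.smul_sum]
  refine Finset.sum_congr rfl fun w hw => ?_
  rw [smul_comm, show a+w+1 = (a+1)+w from by omega]

end Main
end Aux


theorem stmt7 {V : Type*} [AddCommGroup V] [Module ℂ V] [FiniteDimensional ℂ V]
    (Q : ℂ) (Xp Xm J : ℕ → Module.End ℂ V)
    (hL1 : ∀ s t, J s * J t = J t * J s)
    (hL2p : ∀ s t, J s * Xp t - Xp t * J s = (2 : ℂ) • Xp (s + t))
    (hL2m : ∀ s t, J s * Xm t - Xm t * J s = -((2 : ℂ) • Xm (s + t)))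
    (hL3 : ∀ s t, Xp t * Xm s - Xm s * Xp t = J (s + t) - Q • J (s + t + 1))
    (hL4p : ∀ s t, Xp t * Xp s = Xp s * Xp t)
    (hL4m : ∀ s t, Xm t * Xm s = Xm s * Xm t)
    (v : V) (u : ℕ → ℂ) (n : ℕ)
    (hXv : ∀ t, Xp t v = 0)
    (hJv : ∀ t, J t v = u t • v)
    (hn1 : (((n.factorial : ℂ))⁻¹ • (Xm 0) ^ n) v ≠ 0)
    (hn2 : ((((n + 1).factorial : ℂ))⁻¹ • (Xm 0) ^ (n + 1)) v = 0)
    (s t : ℕ) :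
    (∑ w ∈ Finset.range (n + 1),
        ((n.choose w : ℂ) * (-Q) ^ w) •
          (J (t + n * s + w) - Q • J (t + n * s + w + 1))) v =
      (∑ k ∈ Finset.range n,
        ((-1 : ℂ) ^ (n - k + 1)) •
          ((∑ w ∈ Finset.range (k + 1),
              ((k.choose w : ℂ) * (-Q) ^ w) •
                (J (t + k * s + w) - Q • J (t + k * s + w + 1))) *
            Jbr Q J s (n - k))) v := by
  have hbase : Phi Q Xm s (n+1) 0 v = 0 := by
    rw [Phi_factorial]
    exact hn2
  have chain : ∀ p, p ≤ n →
      ∑ q ∈ range (p+1), ((-1:ℂ)^q * jc Q u s (p-q)) • (Phi Q Xm s (n+1-p) q v) = 0 := by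
    intro p
    induction p with
    | zero =>
      intro _
      rw [Finset.sum_range_one]
      simp only [pow_zero, Nat.sub_zero, one_mul]
      rw [jc, one_smul]
      exact hbase
    | succ p ihp =>
      intro hpn
      have h0 := ihp (by omega)
      have hs := star Q J Xm Xp s u hL2m hL3 hL4m v hXv hJv (n-p) p
      rw [show (n-p)+1 = n+1-p from by omega, h0, map_zero] at hs
      have h1 : ∑ q ∈ range (p+2), ((-1:ℂ)^q * jc Q u s (p+1-q)) • (Phi Q Xm s (n-p) q v)
          = 0 := by
        have := hs.symm
        rcases smul_eq_zero.mp this with h | h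
        · exact absurd h (Nat.cast_add_one_ne_zero p)
        · exact h
      rw [show n+1-(p+1) = n-p from by omega]
      exact h1
  have hnfin := chain n le_rfl
  rw [show n+1-n = 1 from by omega] at hnfin
  -- apply Xp t
  have hEt : ∀ q : ℕ, Xp t (fOp Q Xm q (q*s) v) = eta Q u (q+1) (t+q*s) • v := by
    intro q
    have hc := comm_E_f Q J Xm Xp hL3 t q (q*s)
    calc Xp t (fOp Q Xm q (q*s) v) = (Xp t * fOp Q Xm q (q*s)) v := rfl
      _ = (fOp Q Xm q (q*s) * Xp t + hOp Q J (q+1) (t+q*s)) v := by rw [hc]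
      _ = fOp Q Xm q (q*s) (Xp t v) + hOp Q J (q+1) (t+q*s) v := rfl
      _ = eta Q u (q+1) (t+q*s) • v := by
          rw [hXv, map_zero, zero_add, hOp_apply Q J u v hJv]
  have E1 := congrArg (Xp t) hnfin
  rw [map_zero, map_sum] at E1
  have E2 : ∀ q ∈ range (n+1), Xp t (((-1:ℂ)^q * jc Q u s (n-q)) • (Phi Q Xm s 1 q v))
      = ((-1:ℂ)^q * jc Q u s (n-q) * eta Q u (q+1) (t+q*s)) • v := by
    intro q hq
    rw [map_smul, Phi_one, hEt q, smul_smul]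
  rw [Finset.sum_congr rfl E2, ← Finset.sum_smul] at E1
  -- rewrite both sides of the goal
  have hL : (∑ w ∈ Finset.range (n + 1), ((n.choose w : ℂ) * (-Q) ^ w) •
        (J (t + n * s + w) - Q • J (t + n * s + w + 1))) v
      = eta Q u (n+1) (t+n*s) • v := by
    rw [hOp_pascal Q J n (t+n*s)]
    exact hOp_apply Q J u v hJv (n+1) (t+n*s)
  rw [hL, LinearMap.sum_apply]
  have hR : ∀ k ∈ range n, (((-1:ℂ)^(n-k+1)) • ((∑ w ∈ Finset.range (k + 1),
        ((k.choose w : ℂ) * (-Q) ^ w) • (J (t + k * s + w) - Q • J (t + k * s + w + 1))) *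
        Jbr Q J s (n - k))) v
      = ((-1:ℂ)^(n-k+1) * (jc Q u s (n-k) * eta Q u (k+1) (t+k*s))) • v := by
    intro k hk
    rw [hOp_pascal Q J k (t+k*s), LinearMap.smul_apply, Module.End.mul_apply,
      Jbr_apply Q J s u v hJv (n-k), map_smul, hOp_apply Q J u v hJv, smul_smul, smul_smul,
      mul_assoc]
  rw [Finset.sum_congr rfl hR, ← Finset.sum_smul]
  have hpow : ∀ q, q ≤ n → (-1:ℂ)^n * (-1:ℂ)^q = (-1:ℂ)^(n-q) := by
    intro q hq
    have h1 : (-1:ℂ)^(n-q) * (-1:ℂ)^q = (-1:ℂ)^n := by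
      rw [← pow_add, show n-q+q = n from by omega]
    have h2 : (-1:ℂ)^q * (-1:ℂ)^q = 1 := by
      rw [← mul_pow]; norm_num
    calc (-1:ℂ)^n * (-1:ℂ)^q = ((-1:ℂ)^(n-q) * (-1:ℂ)^q) * (-1:ℂ)^q := by rw [h1]
      _ = (-1:ℂ)^(n-q) * ((-1:ℂ)^q * (-1:ℂ)^q) := by ring
      _ = (-1:ℂ)^(n-q) := by rw [h2, mul_one]
  have key : eta Q u (n+1) (t+n*s)
      = (∑ k ∈ range n, (-1:ℂ)^(n-k+1) * (jc Q u s (n-k) * eta Q u (k+1) (t+k*s)))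
        + (-1:ℂ)^n * ∑ q ∈ range (n+1),
            ((-1:ℂ)^q * jc Q u s (n-q) * eta Q u (q+1) (t+q*s)) := by
    rw [Finset.sum_range_succ, mul_add, Finset.mul_sum]
    have hlast : (-1:ℂ)^n * ((-1:ℂ)^n * jc Q u s (n-n) * eta Q u (n+1) (t+n*s))
        = eta Q u (n+1) (t+n*s) := by
      rw [show n-n = 0 from by omega, jc]
      have h2 : (-1:ℂ)^n * (-1:ℂ)^n = 1 := by rw [← mul_pow]; norm_num
      calc (-1:ℂ)^n * ((-1:ℂ)^n * 1 * eta Q u (n+1) (t+n*s))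
          = ((-1:ℂ)^n * (-1:ℂ)^n) * eta Q u (n+1) (t+n*s) := by ring
        _ = eta Q u (n+1) (t+n*s) := by rw [h2, one_mul]
    rw [hlast]
    have hterm : ∀ q ∈ range n,
        (-1:ℂ)^n * ((-1:ℂ)^q * jc Q u s (n-q) * eta Q u (q+1) (t+q*s))
        = -((-1:ℂ)^(n-q+1) * (jc Q u s (n-q) * eta Q u (q+1) (t+q*s))) := by
      intro q hq
      rw [Finset.mem_range] at hq
      calc (-1:ℂ)^n * ((-1:ℂ)^q * jc Q u s (n-q) * eta Q u (q+1) (t+q*s))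
          = ((-1:ℂ)^n * (-1:ℂ)^q) * (jc Q u s (n-q) * eta Q u (q+1) (t+q*s)) := by ring
        _ = (-1:ℂ)^(n-q) * (jc Q u s (n-q) * eta Q u (q+1) (t+q*s)) := by
            rw [hpow q (by omega)]
        _ = -((-1:ℂ)^(n-q+1) * (jc Q u s (n-q) * eta Q u (q+1) (t+q*s))) := by
            rw [pow_succ]; ring
    rw [Finset.sum_congr rfl hterm, Finset.sum_neg_distrib]
    ring
  calc eta Q u (n+1) (t+n*s) • v
      = ((∑ k ∈ range n, (-1:ℂ)^(n-k+1) * (jc Q u s (n-k) * eta Q u (k+1) (t+k*s)))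
          + (-1:ℂ)^n * ∑ q ∈ range (n+1),
              ((-1:ℂ)^q * jc Q u s (n-q) * eta Q u (q+1) (t+q*s))) • v := by rw [← key]
    _ = (∑ k ∈ range n, (-1:ℂ)^(n-k+1) * (jc Q u s (n-k) * eta Q u (k+1) (t+k*s))) • v
        + (-1:ℂ)^n • ((∑ q ∈ range (n+1),
            ((-1:ℂ)^q * jc Q u s (n-q) * eta Q u (q+1) (t+q*s))) • v) := by
        rw [add_smul, smul_smul]
    _ = (∑ k ∈ range n, (-1:ℂ)^(n-k+1) * (jc Q u s (n-k) * eta Q u (k+1) (t+k*s))) • v := by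
        rw [E1, smul_zero, add_zero]
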